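/- Lubkin's average purity formula: Let 1 ≤ m ≤ n, let G be the unitary group of complex matrices indexed by Fin m × Fin n, equipped with its Haar probability measure μ, and fix a unit vector ψ₀ ∈ ℂ^{Fin m × Fin n}. For U ∈ G let ψ_U = U·ψ₀, let ρ(U) = ψ_U ψ_U* be the corresponding rank-one density matrix, and let ρ_A(U) = tr_B ρ(U) be its partial trace over the second factor. Then the Haar average of the purity equals ∫_G Re tr(ρ_A(U)²) dμ(U) = (m+n)/(mn+1). -/

import Mathlib

open scoped BigOperators
open MeasureTheory

/-- The rank-one matrix `ψ ψ*`, with entries `(ψ ψ*)_{uv} = ψ u * conj (ψ v)`. -/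
noncomputable def vecProjector {ι : Type*} (ψ : ι → ℂ) : Matrix ι ι ℂ :=
  fun u v => ψ u * (starRingEnd ℂ) (ψ v)

/-- The partial trace over the second factor: `(tr_B ρ)_{ij} = ∑ μ, ρ_{(i,μ),(j,μ)}`. -/
noncomputable def ptraceB {m n : ℕ} (ρ : Matrix (Fin m × Fin n) (Fin m × Fin n) ℂ) :
    Matrix (Fin m) (Fin m) ℂ :=
  fun i j => ∑ μ, ρ (i, μ) (j, μ)

set_option maxHeartbeats 1000000

namespace LubkinProof
variable {ι : Type*} [Fintype ι] [DecidableEq ι]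

noncomputable def phi (ψ0 : ι → ℂ) (U : Matrix.unitaryGroup ι ℂ) : ι → ℂ :=
  (U : Matrix ι ι ℂ).mulVec ψ0

noncomputable def Mon (ψ0 : ι → ℂ) (a b c d : ι) (U : Matrix.unitaryGroup ι ℂ) : ℂ :=
  phi ψ0 U a * (starRingEnd ℂ) (phi ψ0 U b) *
    (phi ψ0 U c * (starRingEnd ℂ) (phi ψ0 U d))

lemma continuous_phi (ψ0 : ι → ℂ) (a : ι) :
    Continuous fun U : Matrix.unitaryGroup ι ℂ => phi ψ0 U a := by
  simp only [phi, Matrix.mulVec, dotProduct]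
  exact continuous_finset_sum _ fun b _ =>
    (Continuous.matrix_elem continuous_subtype_val a b).mul continuous_const

lemma continuous_Mon (ψ0 : ι → ℂ) (a b c d : ι) :
    Continuous (Mon ψ0 a b c d) := by
  exact ((continuous_phi ψ0 a).mul
      (Complex.continuous_conj.comp (continuous_phi ψ0 b))).mul
    ((continuous_phi ψ0 c).mul (Complex.continuous_conj.comp (continuous_phi ψ0 d)))

lemma norm_phi_le (ψ0 : ι → ℂ) (a : ι) (U : Matrix.unitaryGroup ι ℂ) :
    ‖phi ψ0 U a‖ ≤ ∑ b, ‖ψ0 b‖ := by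
  simp only [phi, Matrix.mulVec, dotProduct]
  refine (norm_sum_le _ _).trans (Finset.sum_le_sum fun b _ => ?_)
  rw [norm_mul]
  calc ‖(U : Matrix ι ι ℂ) a b‖ * ‖ψ0 b‖ ≤ 1 * ‖ψ0 b‖ := by
        exact mul_le_mul_of_nonneg_right (entry_norm_bound_of_unitary U.2 a b) (norm_nonneg _)
    _ = ‖ψ0 b‖ := one_mul _

lemma integrable_Mon {mG : MeasurableSpace (Matrix.unitaryGroup ι ℂ)}
    (hborel : mG = borel (Matrix.unitaryGroup ι ℂ))
    (μ : Measure (Matrix.unitaryGroup ι ℂ)) [IsFiniteMeasure μ]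
    (ψ0 : ι → ℂ) (a b c d : ι) :
    Integrable (Mon ψ0 a b c d) μ := by
  haveI : BorelSpace (Matrix.unitaryGroup ι ℂ) := ⟨hborel⟩
  refine ⟨(continuous_Mon ψ0 a b c d).aestronglyMeasurable, ?_⟩
  refine HasFiniteIntegral.of_bounded (C := (∑ x, ‖ψ0 x‖) ^ 4) (ae_of_all _ fun U => ?_)
  have h : ∀ x : ι, ‖phi ψ0 U x‖ ≤ ∑ x, ‖ψ0 x‖ := fun x => norm_phi_le ψ0 x U
  have h0 : (0:ℝ) ≤ ∑ x, ‖ψ0 x‖ := Finset.sum_nonneg fun _ _ => norm_nonneg _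
  simp only [Mon, norm_mul, RCLike.norm_conj]
  calc ‖phi ψ0 U a‖ * ‖phi ψ0 U b‖ * (‖phi ψ0 U c‖ * ‖phi ψ0 U d‖)
      ≤ (∑ x, ‖ψ0 x‖) * (∑ x, ‖ψ0 x‖) * ((∑ x, ‖ψ0 x‖) * (∑ x, ‖ψ0 x‖)) := by
        gcongr <;> first | exact h _ | exact norm_nonneg _
    _ = (∑ x, ‖ψ0 x‖) ^ 4 := by ring



lemma phi_mul (ψ0 : ι → ℂ) (V U : Matrix.unitaryGroup ι ℂ) :
    phi ψ0 (V * U) = (V : Matrix ι ι ℂ).mulVec (phi ψ0 U) := by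
  simp [phi, Matrix.mulVec_mulVec]

lemma integral_Mon_mul_left {mG : MeasurableSpace (Matrix.unitaryGroup ι ℂ)}
    (hborel : mG = borel (Matrix.unitaryGroup ι ℂ))
    (μ : Measure (Matrix.unitaryGroup ι ℂ)) (hHaar : μ.IsHaarMeasure)
    (ψ0 : ι → ℂ) (a b c d : ι) (V : Matrix.unitaryGroup ι ℂ) :
    ∫ U, Mon ψ0 a b c d (V * U) ∂μ = ∫ U, Mon ψ0 a b c d U ∂μ := by
  haveI : BorelSpace (Matrix.unitaryGroup ι ℂ) := ⟨hborel⟩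
  haveI := hHaar.toIsMulLeftInvariant
  exact integral_mul_left_eq_self (Mon ψ0 a b c d) V

lemma sum_phi_mul_conj (ψ0 : ι → ℂ) (hψ0 : ∑ p, Complex.normSq (ψ0 p) = 1)
    (U : Matrix.unitaryGroup ι ℂ) :
    ∑ a, phi ψ0 U a * (starRingEnd ℂ) (phi ψ0 U a) = 1 := by
  have hU : ∀ p q : ι, (∑ a, (starRingEnd ℂ) ((U : Matrix ι ι ℂ) a q) * (U : Matrix ι ι ℂ) a p)
      = if q = p then 1 else 0 := by
    intro p q
    have h := Matrix.UnitaryGroup.star_mul_self U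
    have := congrFun (congrFun h q) p
    rw [Matrix.mul_apply] at this
    simp only [Matrix.star_apply, Matrix.one_apply] at this
    simpa only [starRingEnd_apply] using this
  calc ∑ a, phi ψ0 U a * (starRingEnd ℂ) (phi ψ0 U a)
      = ∑ a, ∑ p, ∑ q, (ψ0 p * (starRingEnd ℂ) (ψ0 q)) *
          ((U : Matrix ι ι ℂ) a p * (starRingEnd ℂ) ((U : Matrix ι ι ℂ) a q)) := by
        refine Finset.sum_congr rfl fun a _ => ?_
        simp only [phi, Matrix.mulVec, dotProduct, map_sum, map_mul,
          Finset.sum_mul_sum]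
        exact Finset.sum_congr rfl fun p _ => Finset.sum_congr rfl fun q _ => by ring
    _ = ∑ p, ∑ q, (ψ0 p * (starRingEnd ℂ) (ψ0 q)) *
          ∑ a, (starRingEnd ℂ) ((U : Matrix ι ι ℂ) a q) * (U : Matrix ι ι ℂ) a p := by
        rw [Finset.sum_comm]
        refine Finset.sum_congr rfl fun p _ => ?_
        rw [Finset.sum_comm]
        refine Finset.sum_congr rfl fun q _ => ?_
        rw [Finset.mul_sum]
        exact Finset.sum_congr rfl fun a _ => by ring
    _ = ∑ p, ψ0 p * (starRingEnd ℂ) (ψ0 p) := by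
        refine Finset.sum_congr rfl fun p _ => ?_
        simp only [hU]
        simp [Finset.sum_ite_eq, Finset.mul_sum, mul_ite]
    _ = 1 := by
        have : ∀ p : ι, ψ0 p * (starRingEnd ℂ) (ψ0 p) = (Complex.normSq (ψ0 p) : ℂ) := by
          intro p; rw [mul_comm]; exact Complex.normSq_eq_conj_mul_self.symm
        simp only [this]
        rw [← Complex.ofReal_sum]
        norm_cast



lemma diagonal_mem_unitary (c : ι → ℂ) (hc : ∀ x, (starRingEnd ℂ) (c x) * c x = 1) :
    Matrix.diagonal c ∈ Matrix.unitaryGroup ι ℂ := by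
  rw [Matrix.mem_unitaryGroup_iff']
  rw [Matrix.star_eq_conjTranspose, Matrix.diagonal_conjTranspose,
    Matrix.diagonal_mul_diagonal]
  have hfun : (fun i => (star c) i * c i) = fun _ => (1:ℂ) := by
    funext x
    rw [Pi.star_apply, ← starRingEnd_apply]
    exact hc x
  rw [hfun, Matrix.diagonal_one]

lemma permMat_mem (σ : Equiv.Perm ι) :
    (Matrix.of fun x y => if σ y = x then (1:ℂ) else 0) ∈ Matrix.unitaryGroup ι ℂ := by
  rw [Matrix.mem_unitaryGroup_iff']
  ext x y
  rw [Matrix.mul_apply, Matrix.one_apply]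
  simp only [Matrix.star_apply, Matrix.of_apply]
  have key : ∀ z, star (if σ x = z then (1:ℂ) else 0) * (if σ y = z then 1 else 0)
      = if σ x = z then (if σ y = z then (1:ℂ) else 0) else 0 := by
    intro z; by_cases h1 : σ x = z <;> simp [h1]
  simp only [key, Finset.sum_ite_eq, Finset.mem_univ, if_true]
  by_cases h : x = y
  · simp [h]
  · have : ¬ σ y = σ x := fun hh => h (σ.injective hh).symm
    simp [h, this]

lemma T_phase {mG : MeasurableSpace (Matrix.unitaryGroup ι ℂ)}
    (hborel : mG = borel (Matrix.unitaryGroup ι ℂ))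
    (μ : Measure (Matrix.unitaryGroup ι ℂ)) (hHaar : μ.IsHaarMeasure)
    (ψ0 : ι → ℂ) (a b c d k : ι)
    (h : ((if a = k then 1 else 0) + (if c = k then 1 else 0) : ℕ)
       ≠ (if b = k then 1 else 0) + (if d = k then 1 else 0)) :
    ∫ U, Mon ψ0 a b c d U ∂μ = 0 := by
  set e : ι → ℂ := fun x => if x = k then Complex.I else 1 with he_def
  have he : ∀ x, (starRingEnd ℂ) (e x) * e x = 1 := by
    intro x; by_cases hx : x = k <;> simp [he_def, hx]
  set V : Matrix.unitaryGroup ι ℂ := ⟨Matrix.diagonal e, diagonal_mem_unitary e he⟩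
    with hV_def
  set f : ℂ := e a * (starRingEnd ℂ) (e b) * (e c * (starRingEnd ℂ) (e d)) with hf_def
  have hf : ∀ U, Mon ψ0 a b c d (V * U) = f * Mon ψ0 a b c d U := by
    intro U
    have hφ : ∀ x, phi ψ0 (V * U) x = e x * phi ψ0 U x := by
      intro x
      rw [phi_mul]
      show (Matrix.diagonal e).mulVec (phi ψ0 U) x = _
      rw [Matrix.mulVec_diagonal]
    simp only [Mon, hφ, map_mul, hf_def]
    ring
  have h1 : ∫ U, Mon ψ0 a b c d (V * U) ∂μ = ∫ U, Mon ψ0 a b c d U ∂μ :=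
    integral_Mon_mul_left hborel μ hHaar ψ0 a b c d V
  have h2 : ∫ U, Mon ψ0 a b c d (V * U) ∂μ = f * ∫ U, Mon ψ0 a b c d U ∂μ := by
    simp_rw [hf, ← smul_eq_mul, integral_smul]
  have hTf : ∫ U, Mon ψ0 a b c d U ∂μ = f * ∫ U, Mon ψ0 a b c d U ∂μ := by
    conv_lhs => rw [← h1, h2]
  have hf1 : f ≠ 1 := by
    by_cases ha : a = k <;> by_cases hb : b = k <;> by_cases hc2 : c = k <;>
      by_cases hd : d = k <;>
      simp only [hf_def, he_def, ha, hb, hc2, hd, if_true, if_false] at h ⊢ <;>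
      first
        | exact absurd rfl h
        | (simp [Complex.ext_iff]; try norm_num)
  have hz : (f - 1) * ∫ U, Mon ψ0 a b c d U ∂μ = 0 := by linear_combination -hTf
  rcases mul_eq_zero.mp hz with h' | h'
  · exact absurd (sub_eq_zero.mp h') hf1
  · exact h'

lemma permMat_mulVec (σ : Equiv.Perm ι) (w : ι → ℂ) (x : ι) :
    (Matrix.of fun x y => if σ y = x then (1:ℂ) else 0).mulVec w x = w (σ.symm x) := by
  have key : ∀ y, (Matrix.of fun x y => if σ y = x then (1:ℂ) else 0) x y * w y
      = if y = σ.symm x then w y else 0 := by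
    intro y
    by_cases hy : σ y = x
    · have : y = σ.symm x := by rw [Equiv.eq_symm_apply]; exact hy
      simp [Matrix.of_apply, hy, this]
    · have : ¬ y = σ.symm x := fun hh => hy ((Equiv.eq_symm_apply σ).mp hh)
      simp [Matrix.of_apply, hy, this]
  rw [Matrix.mulVec, dotProduct]
  simp only [key, Finset.sum_ite_eq', Finset.mem_univ, if_true]

lemma T_perm {mG : MeasurableSpace (Matrix.unitaryGroup ι ℂ)}
    (hborel : mG = borel (Matrix.unitaryGroup ι ℂ))
    (μ : Measure (Matrix.unitaryGroup ι ℂ)) (hHaar : μ.IsHaarMeasure)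
    (ψ0 : ι → ℂ) (a b c d : ι) (σ : Equiv.Perm ι) :
    ∫ U, Mon ψ0 (σ.symm a) (σ.symm b) (σ.symm c) (σ.symm d) U ∂μ
      = ∫ U, Mon ψ0 a b c d U ∂μ := by
  set V : Matrix.unitaryGroup ι ℂ :=
    ⟨Matrix.of fun x y => if σ y = x then (1:ℂ) else 0, permMat_mem σ⟩ with hV
  have hf : ∀ U, Mon ψ0 a b c d (V * U)
      = Mon ψ0 (σ.symm a) (σ.symm b) (σ.symm c) (σ.symm d) U := by
    intro U
    have hφ : ∀ x, phi ψ0 (V * U) x = phi ψ0 U (σ.symm x) := by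
      intro x
      rw [phi_mul]
      exact permMat_mulVec σ (phi ψ0 U) x
    simp only [Mon, hφ]
  rw [← integral_Mon_mul_left hborel μ hHaar ψ0 a b c d V]
  simp_rw [hf]

lemma T_swap {mG : MeasurableSpace (Matrix.unitaryGroup ι ℂ)}
    (hborel : mG = borel (Matrix.unitaryGroup ι ℂ))
    (μ : Measure (Matrix.unitaryGroup ι ℂ)) (hHaar : μ.IsHaarMeasure)
    (ψ0 : ι → ℂ) (a b : ι) :
    ∫ U, Mon ψ0 a a a a U ∂μ = ∫ U, Mon ψ0 b b b b U ∂μ := by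
  have := T_perm hborel μ hHaar ψ0 b b b b (Equiv.swap a b)
  simpa [Equiv.symm_swap, Equiv.swap_apply_right] using this

noncomputable def rr : ℂ := ((Real.sqrt 2)⁻¹ : ℝ)

lemma conj_rr : (starRingEnd ℂ) rr = rr := Complex.conj_ofReal _

lemma star_rr : star rr = rr := conj_rr

lemma rr_sq : rr * rr = (2:ℂ)⁻¹ := by
  rw [rr, ← Complex.ofReal_mul]
  rw [← mul_inv, Real.mul_self_sqrt (by norm_num : (0:ℝ) ≤ 2)]
  norm_num

noncomputable def had (a b : ι) : Matrix ι ι ℂ := Matrix.of fun x y =>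
  if x = a then (if y = a then rr else if y = b then rr else 0)
  else if x = b then (if y = a then rr else if y = b then -rr else 0)
  else if y = x then 1 else 0

lemma sum_split (a b : ι) (hab : a ≠ b) (g : ι → ℂ) (h0 : ∀ z, z ≠ a → z ≠ b → g z = 0) :
    ∑ z, g z = g a + g b := by
  rw [← Finset.add_sum_erase _ g (Finset.mem_univ a)]
  congr 1
  rw [← Finset.add_sum_erase _ g
    (Finset.mem_erase.mpr ⟨Ne.symm hab, Finset.mem_univ b⟩)]
  rw [Finset.sum_eq_zero, add_zero]
  intro z hz
  simp only [Finset.mem_erase] at hz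
  exact h0 z hz.2.1 hz.1

lemma had_apply_a (a b : ι) (w : ι) :
    had a b a w = if w = a then rr else if w = b then rr else 0 := by simp [had]

lemma had_apply_b (a b : ι) (hab : a ≠ b) (w : ι) :
    had a b b w = if w = a then rr else if w = b then -rr else 0 := by
  simp [had, Ne.symm hab]

lemma had_apply_z (a b : ι) (z w : ι) (hza : z ≠ a) (hzb : z ≠ b) :
    had a b z w = if w = z then 1 else 0 := by simp [had, hza, hzb]

lemma had_mem (a b : ι) (hab : a ≠ b) : had a b ∈ Matrix.unitaryGroup ι ℂ := by
  rw [Matrix.mem_unitaryGroup_iff']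
  ext x y
  rw [Matrix.mul_apply, Matrix.one_apply]
  simp only [Matrix.star_apply]
  by_cases hxa : x = a <;> by_cases hxb : x = b <;> by_cases hya : y = a <;>
    by_cases hyb : y = b
  all_goals (try (exact absurd (hxa.symm.trans hxb) hab))
  all_goals (try (exact absurd (hya.symm.trans hyb) hab))
  -- x=a, y=a
  · rw [sum_split a b hab _ (fun z hza hzb => by
      rw [had_apply_z a b z x hza hzb, if_neg (fun h => hza (h.symm.trans hxa))]; simp)]
    rw [had_apply_a, had_apply_a, had_apply_b a b hab, had_apply_b a b hab]
    simp [hxa, hya, star_rr, rr_sq]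
    norm_num
  -- x=a, y=b
  · rw [sum_split a b hab _ (fun z hza hzb => by
      rw [had_apply_z a b z x hza hzb, if_neg (fun h => hza (h.symm.trans hxa))]; simp)]
    rw [had_apply_a, had_apply_a, had_apply_b a b hab, had_apply_b a b hab]
    rw [if_neg (fun h : x = y => hab (hxa.symm.trans (h.trans hyb)))]
    simp [hxa, hyb, hab, Ne.symm hab, star_rr]
  -- x=a, y∉
  · rw [Finset.sum_eq_zero, if_neg (fun h : x = y => hya (h.symm.trans hxa))]
    intro z _
    by_cases hza : z = a <;> by_cases hzb : z = b
    · exact absurd (hza.symm.trans hzb) hab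
    · simp [hza, had_apply_a, hya, hyb]
    · simp [hzb, had_apply_b a b hab, hya, hyb]
    · rw [had_apply_z a b z x hza hzb, if_neg (fun h : x = z => hza (h.symm.trans hxa))]
      simp
  -- x=b, y=a
  · rw [sum_split a b hab _ (fun z hza hzb => by
      rw [had_apply_z a b z x hza hzb, if_neg (fun h => hzb (h.symm.trans hxb))]; simp)]
    rw [had_apply_a, had_apply_a, had_apply_b a b hab, had_apply_b a b hab]
    rw [if_neg (fun h : x = y => hab ((hya.symm.trans (h.symm.trans hxb)).symm ▸ rfl))]
    simp [hxb, hya, hab, Ne.symm hab, star_rr]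
  -- x=b, y=b
  · rw [sum_split a b hab _ (fun z hza hzb => by
      rw [had_apply_z a b z x hza hzb, if_neg (fun h => hzb (h.symm.trans hxb))]; simp)]
    rw [had_apply_a, had_apply_a, had_apply_b a b hab, had_apply_b a b hab]
    simp [hxb, hyb, hab, Ne.symm hab, star_rr, rr_sq]
    norm_num
  -- x=b, y∉
  · rw [Finset.sum_eq_zero, if_neg (fun h : x = y => hyb (h.symm.trans hxb))]
    intro z _
    by_cases hza : z = a <;> by_cases hzb : z = b
    · exact absurd (hza.symm.trans hzb) hab
    · simp [hza, had_apply_a, hya, hyb]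
    · simp [hzb, had_apply_b a b hab, hya, hyb]
    · rw [had_apply_z a b z x hza hzb, if_neg (fun h : x = z => hzb (h.symm.trans hxb))]
      simp
  -- x∉, y=a
  · rw [Finset.sum_eq_zero, if_neg (fun h : x = y => hxa (h.trans hya))]
    intro z _
    by_cases hza : z = a <;> by_cases hzb : z = b
    · exact absurd (hza.symm.trans hzb) hab
    · simp [hza, had_apply_a, hxa, hxb]
    · simp [hzb, had_apply_b a b hab, hxa, hxb]
    · rw [had_apply_z a b z y hza hzb, if_neg (fun h : y = z => hza (h.symm.trans hya))]
      simp
  -- x∉, y=b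
  · rw [Finset.sum_eq_zero, if_neg (fun h : x = y => hxb (h.trans hyb))]
    intro z _
    by_cases hza : z = a <;> by_cases hzb : z = b
    · exact absurd (hza.symm.trans hzb) hab
    · simp [hza, had_apply_a, hxa, hxb]
    · simp [hzb, had_apply_b a b hab, hxa, hxb]
    · rw [had_apply_z a b z y hza hzb, if_neg (fun h : y = z => hzb (h.symm.trans hyb))]
      simp
  -- x∉, y∉
  · have key : ∀ z, star (had a b z x) * had a b z y
        = if z = x then (if y = x then (1:ℂ) else 0) else 0 := by
      intro z
      by_cases hzx : z = x
      · have hza : z ≠ a := fun h => hxa (hzx.symm.trans h)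
        have hzb : z ≠ b := fun h => hxb (hzx.symm.trans h)
        rw [had_apply_z a b z x hza hzb, had_apply_z a b z y hza hzb]
        simp [hzx]
      · by_cases hza : z = a
        · simp [hza, had_apply_a, hxa, hxb, hzx]
          exact fun h => absurd h.symm hxa
        · by_cases hzb : z = b
          · simp [hzb, had_apply_b a b hab, hxa, hxb, hzx]
            exact fun h => absurd h.symm hxb
          · rw [had_apply_z a b z x hza hzb, had_apply_z a b z y hza hzb,
              if_neg (fun h : x = z => hzx h.symm)]
            simp [hzx]
    simp only [key, Finset.sum_ite_eq', Finset.mem_univ, if_true]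
    by_cases hxy : x = y
    · simp [hxy]
    · rw [if_neg (fun h : y = x => hxy h.symm), if_neg hxy]

lemma had_mulVec_a (a b : ι) (hab : a ≠ b) (w : ι → ℂ) :
    (had a b).mulVec w a = rr * (w a + w b) := by
  rw [Matrix.mulVec, dotProduct]
  rw [sum_split a b hab _ (fun z hza hzb => by
    rw [had_apply_a, if_neg hza, if_neg hzb, zero_mul])]
  rw [had_apply_a, had_apply_a, if_pos rfl, if_neg (Ne.symm hab), if_pos rfl]
  ring

lemma had_mulVec_b (a b : ι) (hab : a ≠ b) (w : ι → ℂ) :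
    (had a b).mulVec w b = rr * (w a - w b) := by
  rw [Matrix.mulVec, dotProduct]
  rw [sum_split a b hab _ (fun z hza hzb => by
    rw [had_apply_b a b hab, if_neg hza, if_neg hzb, zero_mul])]
  rw [had_apply_b a b hab, had_apply_b a b hab, if_pos rfl,
    if_neg (Ne.symm hab), if_pos rfl]
  ring

lemma T_had {mG : MeasurableSpace (Matrix.unitaryGroup ι ℂ)}
    (hborel : mG = borel (Matrix.unitaryGroup ι ℂ))
    (μ : Measure (Matrix.unitaryGroup ι ℂ)) (hHaar : μ.IsHaarMeasure)
    [IsProbabilityMeasure μ] (ψ0 : ι → ℂ) (a b : ι) (hab : a ≠ b) :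
    2 * ∫ U, Mon ψ0 a a b b U ∂μ = ∫ U, Mon ψ0 a a a a U ∂μ := by
  set v : Fin 2 → ι := ![a, b] with hv
  set V : Matrix.unitaryGroup ι ℂ := ⟨had a b, had_mem a b hab⟩ with hV
  have hr4 : rr * rr * (rr * rr) = (4:ℂ)⁻¹ := by rw [rr_sq]; norm_num
  have hpoint : ∀ U, Mon ψ0 a a a a (V * U)
      = (4:ℂ)⁻¹ * ∑ q : (Fin 2 × Fin 2) × Fin 2 × Fin 2,
          Mon ψ0 (v q.1.1) (v q.1.2) (v q.2.1) (v q.2.2) U := by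
    intro U
    have hφ : phi ψ0 (V * U) a = rr * (phi ψ0 U a + phi ψ0 U b) := by
      rw [phi_mul]; exact had_mulVec_a a b hab (phi ψ0 U)
    rw [show Mon ψ0 a a a a (V * U) = rr * rr * (rr * rr) *
        ((phi ψ0 U a + phi ψ0 U b) * (starRingEnd ℂ) (phi ψ0 U a + phi ψ0 U b) *
         ((phi ψ0 U a + phi ψ0 U b) * (starRingEnd ℂ) (phi ψ0 U a + phi ψ0 U b))) from by
      simp only [Mon, hφ, map_mul, conj_rr]; ring]
    rw [hr4]
    congr 1
    rw [Fintype.sum_prod_type]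
    simp only [Fintype.sum_prod_type, Fin.sum_univ_two, hv, Matrix.cons_val_zero,
      Matrix.cons_val_one, Matrix.head_cons, Mon, map_add]
    ring
  have h1 : ∫ U, Mon ψ0 a a a a (V * U) ∂μ = ∫ U, Mon ψ0 a a a a U ∂μ :=
    integral_Mon_mul_left hborel μ hHaar ψ0 a a a a V
  have h2 : ∫ U, Mon ψ0 a a a a (V * U) ∂μ
      = (4:ℂ)⁻¹ * ∑ q : (Fin 2 × Fin 2) × Fin 2 × Fin 2,
          ∫ U, Mon ψ0 (v q.1.1) (v q.1.2) (v q.2.1) (v q.2.2) U ∂μ := by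
    simp_rw [hpoint, ← smul_eq_mul, integral_smul]
    congr 1
    rw [integral_finset_sum]
    exact fun q _ => integrable_Mon hborel μ ψ0 _ _ _ _
  have hexp : ∑ q : (Fin 2 × Fin 2) × Fin 2 × Fin 2,
      ∫ U, Mon ψ0 (v q.1.1) (v q.1.2) (v q.2.1) (v q.2.2) U ∂μ
      = 2 * (∫ U, Mon ψ0 a a a a U ∂μ) + 4 * ∫ U, Mon ψ0 a a b b U ∂μ := by
    rw [Fintype.sum_prod_type]
    simp only [Fintype.sum_prod_type, Fin.sum_univ_two, hv, Matrix.cons_val_zero,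
      Matrix.cons_val_one, Matrix.head_cons]
    have hb' : b ≠ a := Ne.symm hab
    -- zero terms
    have z1 : ∫ U, Mon ψ0 a a a b U ∂μ = 0 :=
      T_phase hborel μ hHaar ψ0 a a a b b (by simp [hab, hb'])
    have z2 : ∫ U, Mon ψ0 a a b a U ∂μ = 0 :=
      T_phase hborel μ hHaar ψ0 a a b a b (by simp [hab, hb'])
    have z3 : ∫ U, Mon ψ0 a b a a U ∂μ = 0 :=
      T_phase hborel μ hHaar ψ0 a b a a b (by simp [hab, hb'])
    have z4 : ∫ U, Mon ψ0 b a a a U ∂μ = 0 :=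
      T_phase hborel μ hHaar ψ0 b a a a b (by simp [hab, hb'])
    have z5 : ∫ U, Mon ψ0 a b b b U ∂μ = 0 :=
      T_phase hborel μ hHaar ψ0 a b b b a (by simp [hab, hb'])
    have z6 : ∫ U, Mon ψ0 b a b b U ∂μ = 0 :=
      T_phase hborel μ hHaar ψ0 b a b b a (by simp [hab, hb'])
    have z7 : ∫ U, Mon ψ0 b b a b U ∂μ = 0 :=
      T_phase hborel μ hHaar ψ0 b b a b a (by simp [hab, hb'])
    have z8 : ∫ U, Mon ψ0 b b b a U ∂μ = 0 :=
      T_phase hborel μ hHaar ψ0 b b b a a (by simp [hab, hb'])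
    have z9 : ∫ U, Mon ψ0 a b a b U ∂μ = 0 :=
      T_phase hborel μ hHaar ψ0 a b a b a (by simp [hab, hb'])
    have z10 : ∫ U, Mon ψ0 b a b a U ∂μ = 0 :=
      T_phase hborel μ hHaar ψ0 b a b a a (by simp [hab, hb'])
    have e1 : ∫ U, Mon ψ0 a b b a U ∂μ = ∫ U, Mon ψ0 a a b b U ∂μ := by
      rw [show Mon ψ0 a b b a = Mon ψ0 a a b b from funext fun U => by
        simp only [Mon]; ring]
    have e2 : ∫ U, Mon ψ0 b a a b U ∂μ = ∫ U, Mon ψ0 a a b b U ∂μ := by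
      rw [show Mon ψ0 b a a b = Mon ψ0 a a b b from funext fun U => by
        simp only [Mon]; ring]
    have e3 : ∫ U, Mon ψ0 b b a a U ∂μ = ∫ U, Mon ψ0 a a b b U ∂μ := by
      rw [show Mon ψ0 b b a a = Mon ψ0 a a b b from funext fun U => by
        simp only [Mon]; ring]
    have e4 : ∫ U, Mon ψ0 b b b b U ∂μ = ∫ U, Mon ψ0 a a a a U ∂μ :=
      (T_swap hborel μ hHaar ψ0 a b).symm
    rw [z1, z2, z3, z4, z5, z6, z7, z8, z9, z10, e1, e2, e3, e4]
    ring
  have := h1.symm.trans h2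
  rw [hexp] at this
  linear_combination (-2:ℂ) * this

lemma T_norm {mG : MeasurableSpace (Matrix.unitaryGroup ι ℂ)}
    (hborel : mG = borel (Matrix.unitaryGroup ι ℂ))
    (μ : Measure (Matrix.unitaryGroup ι ℂ)) [IsProbabilityMeasure μ]
    (ψ0 : ι → ℂ) (hψ0 : ∑ p, Complex.normSq (ψ0 p) = 1) :
    ∑ q : ι × ι, ∫ U, Mon ψ0 q.1 q.1 q.2 q.2 U ∂μ = 1 := by
  rw [← integral_finset_sum _ (fun q _ => integrable_Mon hborel μ ψ0 _ _ _ _)]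
  have hpt : ∀ U, ∑ q : ι × ι, Mon ψ0 q.1 q.1 q.2 q.2 U = 1 := by
    intro U
    rw [Fintype.sum_prod_type]
    have hrow : ∀ a : ι, ∑ b, Mon ψ0 a a b b U
        = phi ψ0 U a * (starRingEnd ℂ) (phi ψ0 U a) := by
      intro a
      have : ∑ b, Mon ψ0 a a b b U
          = (phi ψ0 U a * (starRingEnd ℂ) (phi ψ0 U a)) *
            ∑ b, phi ψ0 U b * (starRingEnd ℂ) (phi ψ0 U b) := by
        rw [Finset.mul_sum]
        exact Finset.sum_congr rfl fun b _ => by simp only [Mon]; try ring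
      rw [this, sum_phi_mul_conj ψ0 hψ0 U, mul_one]
    simp only [hrow]
    exact sum_phi_mul_conj ψ0 hψ0 U
  simp only [hpt]
  simp

end LubkinProof

open LubkinProof in
/-- **Lubkin's average purity formula.** For `1 ≤ m ≤ n` and a Haar-random unitary `U` on
`ℂ^{m·n}` applied to a fixed unit vector `ψ₀`, the average purity of the reduced state
`ρ_A(U) = tr_B (ψ_U ψ_U*)` equals `(m+n)/(mn+1)`. -/
theorem lubkin_average_purity (m n : ℕ) (hm : 1 ≤ m) (hmn : m ≤ n)
    (ψ0 : Fin m × Fin n → ℂ)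
    (hψ0 : ∑ p : Fin m × Fin n, Complex.normSq (ψ0 p) = 1)
    {mG : MeasurableSpace (Matrix.unitaryGroup (Fin m × Fin n) ℂ)}
    (hborel : mG = borel (Matrix.unitaryGroup (Fin m × Fin n) ℂ))
    (μ : Measure (Matrix.unitaryGroup (Fin m × Fin n) ℂ))
    (hHaar : μ.IsHaarMeasure) (hprob : IsProbabilityMeasure μ) :
    ∫ U : Matrix.unitaryGroup (Fin m × Fin n) ℂ,
        (((ptraceB (vecProjector
            ((U : Matrix (Fin m × Fin n) (Fin m × Fin n) ℂ).mulVec ψ0))) ^ 2).trace).re ∂μ =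
      ((m : ℝ) + n) / ((m : ℝ) * n + 1) := by
  haveI := hprob
  have hn : 1 ≤ n := le_trans hm hmn
  set p0 : Fin m × Fin n := (⟨0, hm⟩, ⟨0, hn⟩) with hp0
  set α : ℂ := ∫ U, Mon ψ0 p0 p0 p0 p0 U ∂μ with hαdef
  -- pointwise expansion of the purity
  have hpoint : ∀ U : Matrix.unitaryGroup (Fin m × Fin n) ℂ,
      ((ptraceB (vecProjector
          ((U : Matrix (Fin m × Fin n) (Fin m × Fin n) ℂ).mulVec ψ0))) ^ 2).trace
      = ∑ q : (Fin m × Fin m) × Fin n × Fin n,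
          Mon ψ0 (q.1.1, q.2.1) (q.1.2, q.2.1) (q.1.2, q.2.2) (q.1.1, q.2.2) U := by
    intro U
    rw [pow_two]
    simp only [Matrix.trace, Matrix.diag, Matrix.mul_apply, ptraceB, vecProjector,
      Fintype.sum_prod_type]
    refine Finset.sum_congr rfl fun i _ => Finset.sum_congr rfl fun j _ => ?_
    rw [Finset.sum_mul_sum]
    refine Finset.sum_congr rfl fun μ' _ => Finset.sum_congr rfl fun ν _ => ?_
    simp only [Mon, phi]
    try ring
  -- integrability of the complex integrand
  have hint : Integrable (fun U : Matrix.unitaryGroup (Fin m × Fin n) ℂ =>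
      ((ptraceB (vecProjector
          ((U : Matrix (Fin m × Fin n) (Fin m × Fin n) ℂ).mulVec ψ0))) ^ 2).trace) μ := by
    rw [show (fun U : Matrix.unitaryGroup (Fin m × Fin n) ℂ =>
        ((ptraceB (vecProjector
            ((U : Matrix (Fin m × Fin n) (Fin m × Fin n) ℂ).mulVec ψ0))) ^ 2).trace)
        = fun U => ∑ q : (Fin m × Fin m) × Fin n × Fin n,
            Mon ψ0 (q.1.1, q.2.1) (q.1.2, q.2.1) (q.1.2, q.2.2) (q.1.1, q.2.2) U
        from funext hpoint]
    exact integrable_finset_sum _ fun q _ => integrable_Mon hborel μ ψ0 _ _ _ _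
  -- reduce real integral to complex one
  have hre : ∫ U : Matrix.unitaryGroup (Fin m × Fin n) ℂ,
        (((ptraceB (vecProjector
            ((U : Matrix (Fin m × Fin n) (Fin m × Fin n) ℂ).mulVec ψ0))) ^ 2).trace).re ∂μ
      = (∫ U : Matrix.unitaryGroup (Fin m × Fin n) ℂ,
          ((ptraceB (vecProjector
            ((U : Matrix (Fin m × Fin n) (Fin m × Fin n) ℂ).mulVec ψ0))) ^ 2).trace ∂μ).re := by
    have := ContinuousLinearMap.integral_comp_comm Complex.reCLM hint
    simpa using this
  -- compute the complex integral as a sum of moments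
  have hT : ∫ U : Matrix.unitaryGroup (Fin m × Fin n) ℂ,
        ((ptraceB (vecProjector
          ((U : Matrix (Fin m × Fin n) (Fin m × Fin n) ℂ).mulVec ψ0))) ^ 2).trace ∂μ
      = ∑ q : (Fin m × Fin m) × Fin n × Fin n,
          ∫ U, Mon ψ0 (q.1.1, q.2.1) (q.1.2, q.2.1) (q.1.2, q.2.2) (q.1.1, q.2.2) U ∂μ := by
    simp only [hpoint]
    exact integral_finset_sum _ fun q _ => integrable_Mon hborel μ ψ0 _ _ _ _
  -- values of the moments
  have hαconst : ∀ p : Fin m × Fin n, ∫ U, Mon ψ0 p p p p U ∂μ = α :=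
    fun p => T_swap hborel μ hHaar ψ0 p p0
  have hβ : ∀ p q' : Fin m × Fin n, p ≠ q' → ∫ U, Mon ψ0 p p q' q' U ∂μ = α / 2 := by
    intro p q' hpq
    have h2 := T_had hborel μ hHaar ψ0 p q' hpq
    rw [hαconst p] at h2
    linear_combination h2 / 2
  have hval : ∀ (i j : Fin m) (μ' ν : Fin n),
      ∫ U, Mon ψ0 (i, μ') (j, μ') (j, ν) (i, ν) U ∂μ
      = α/2 * ((if i = j then 1 else 0) + (if μ' = ν then 1 else 0)) := by
    intro i j μ' ν
    by_cases hij : i = j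
    · by_cases hμν : μ' = ν
      · subst hij; subst hμν
        rw [hαconst]
        simp only [eq_self_iff_true, if_true]
        ring
      · subst hij
        have hne : ((i, μ') : Fin m × Fin n) ≠ (i, ν) := fun h => hμν (congrArg Prod.snd h)
        rw [hβ _ _ hne]
        simp only [eq_self_iff_true, if_true, hμν, if_false]
        ring
    · by_cases hμν : μ' = ν
      · subst hμν
        have hne : ((i, μ') : Fin m × Fin n) ≠ (j, μ') := fun h => hij (congrArg Prod.fst h)
        rw [show Mon ψ0 (i,μ') (j,μ') (j,μ') (i,μ') = Mon ψ0 (i,μ') (i,μ') (j,μ') (j,μ')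
          from funext fun U => by simp only [Mon]; ring]
        rw [hβ _ _ hne]
        simp only [eq_self_iff_true, if_true, hij, if_false]
        ring
      · have h1 : ¬ (((j, μ') : Fin m × Fin n) = (i, μ')) :=
          fun h => hij (congrArg Prod.fst h).symm
        have h2 : ¬ (((i, ν) : Fin m × Fin n) = (i, μ')) :=
          fun h => hμν (congrArg Prod.snd h).symm
        have h3 : ¬ (((j, ν) : Fin m × Fin n) = (i, μ')) :=
          fun h => hij (congrArg Prod.fst h).symm
        rw [T_phase hborel μ hHaar ψ0 _ _ _ _ ((i, μ')) (by simp [h1, h2, h3])]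
        simp only [hij, hμν, if_false]
        ring
  -- evaluate the big sum
  have hsum : ∑ q : (Fin m × Fin m) × Fin n × Fin n,
      ∫ U, Mon ψ0 (q.1.1, q.2.1) (q.1.2, q.2.1) (q.1.2, q.2.2) (q.1.1, q.2.2) U ∂μ
      = α/2 * ((m:ℂ)*n*n + (n:ℂ)*m*m) := by
    rw [Fintype.sum_prod_type]
    simp only [Fintype.sum_prod_type, hval]
    simp only [mul_add, Finset.sum_add_distrib, Finset.sum_const, Finset.card_univ,
      Fintype.card_fin, nsmul_eq_mul, mul_ite, mul_one, mul_zero, Finset.sum_ite_eq,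
      Finset.mem_univ, if_true]
    ring
  -- normalization determines α
  have hval2 : ∀ p q' : Fin m × Fin n, ∫ U, Mon ψ0 p p q' q' U ∂μ
      = α/2 * (1 + if p = q' then 1 else 0) := by
    intro p q'
    by_cases h : p = q'
    · subst h; rw [hαconst]; simp only [eq_self_iff_true, if_true]; ring
    · rw [hβ _ _ h]; simp only [h, if_false]; ring
  have hnorm := T_norm hborel μ ψ0 hψ0
  have hαval : α/2 * (((m:ℂ)*n) * ((m:ℂ)*n) + (m:ℂ)*n) = 1 := by
    rw [← hnorm, Fintype.sum_prod_type]
    simp only [hval2]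
    simp only [mul_add, mul_one, Finset.sum_add_distrib, Finset.sum_const,
      Finset.card_univ, Fintype.card_prod, Fintype.card_fin, nsmul_eq_mul, mul_ite,
      mul_zero, Finset.sum_ite_eq, Finset.mem_univ, if_true]
    push_cast
    ring
  -- finish
  rw [hre, hT, hsum]
  have hcast : α/2 * ((m:ℂ)*n*n + (n:ℂ)*m*m)
      = ((((m:ℝ) + n) / ((m:ℝ)*n + 1) : ℝ) : ℂ) := by
    have h1c : ((m*n+1 : ℕ) : ℂ) ≠ 0 := Nat.cast_ne_zero.mpr (by omega)
    push_cast at h1c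
    rw [Complex.ofReal_div]
    push_cast
    rw [eq_div_iff h1c]
    linear_combination ((m:ℂ) + (n:ℂ)) * hαval
  rw [hcast, Complex.ofReal_re]
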